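/- Active and inert maps in the simplex category admit pushouts along each other, and the resulting maps are again active and inert: given an active morphism a : [m] ⟶ [n] and an inert morphism u : [m] ⟶ [k], there exist an object [p], an inert morphism u' : [n] ⟶ [p] and an active morphism a' : [k] ⟶ [p] with u' ∘ a = a' ∘ u, such that this commutative square is a pushout square in the simplex category. -/

import Mathlib

open CategoryTheory SimplexCategory

/-- A morphism `f : [m] ⟶ [n]` in the simplex category is *active* if it preserves
the endpoints: `f 0 = 0` and `f m = n`. -/
def IsActive {m n : SimplexCategory} (f : m ⟶ n) : Prop :=
  f.toOrderHom 0 = 0 ∧ f.toOrderHom (Fin.last m.len) = Fin.last n.len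

/-- A morphism `f : [m] ⟶ [n]` in the simplex category is *inert* if it preserves
distances: `f (i+1) = f i + 1` for all `0 ≤ i ≤ m - 1`. -/
def IsInert {m n : SimplexCategory} (f : m ⟶ n) : Prop :=
  ∀ i : Fin m.len, (f.toOrderHom i.succ : ℕ) = (f.toOrderHom i.castSucc : ℕ) + 1

/-- Active and inert maps in the simplex category admit pushouts along each other,
and the resulting maps are again active and inert. -/
theorem active_inert_pushout {m n k : SimplexCategory}
    (a : m ⟶ n) (ha : IsActive a) (u : m ⟶ k) (hu : IsInert u) :
    ∃ (p : SimplexCategory) (u' : n ⟶ p) (a' : k ⟶ p),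
      IsInert u' ∧ IsActive a' ∧ IsPushout a u u' a' := by
  obtain ⟨ha0, ha1⟩ := ha
  have haval0 : (a.toOrderHom 0 : ℕ) = 0 := by rw [ha0]; rfl
  have haval1 : (a.toOrderHom (Fin.last m.len) : ℕ) = n.len := by rw [ha1]; rfl
  set b : ℕ := (u.toOrderHom 0 : ℕ) with hbdef
  have hub : ∀ i : Fin (m.len + 1), (u.toOrderHom i : ℕ) = b + i.val := by
    intro i
    induction i using Fin.induction with
    | zero => simp [hbdef]
    | succ i ih =>
      have h := hu i
      rw [h, ih]
      simp [Fin.val_succ, Fin.coe_castSucc]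
      omega
  have hulast : (u.toOrderHom (Fin.last m.len) : ℕ) = b + m.len := by
    have := hub (Fin.last m.len); simpa using this
  have hbK : b + m.len ≤ k.len := by
    have h2 := (u.toOrderHom (Fin.last m.len)).isLt
    omega
  set P : ℕ := k.len + n.len - m.len with hPdef
  have hNP : b + n.len ≤ P := by omega
  refine ⟨SimplexCategory.mk P,
    SimplexCategory.Hom.mk
      ⟨fun j => ⟨min (b + j.val) P, Nat.lt_succ_of_le (min_le_right _ _)⟩,
       show Monotone _ from fun x y hxy => by
        have hxy' : x.val ≤ y.val := hxy
        simp only [Fin.mk_le_mk]; omega⟩,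
    SimplexCategory.Hom.mk
      ⟨fun i => ⟨min (if i.val ≤ b then i.val else if i.val ≤ b + m.len then
          b + (a.toOrderHom ⟨min (i.val - b) m.len,
            Nat.lt_succ_of_le (min_le_right _ _)⟩ : ℕ)
          else i.val - m.len + n.len) P, Nat.lt_succ_of_le (min_le_right _ _)⟩,
       show Monotone _ from fun x y hxy => by
        have hxy' : x.val ≤ y.val := hxy
        simp only [Fin.mk_le_mk]
        have hx1 := Fin.is_le (a.toOrderHom ⟨min (x.val - b) m.len,
          Nat.lt_succ_of_le (min_le_right _ _)⟩)
        have hy1 := Fin.is_le (a.toOrderHom ⟨min (y.val - b) m.len,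
          Nat.lt_succ_of_le (min_le_right _ _)⟩)
        have hmono : (a.toOrderHom ⟨min (x.val - b) m.len,
            Nat.lt_succ_of_le (min_le_right _ _)⟩ : ℕ) ≤
            (a.toOrderHom ⟨min (y.val - b) m.len,
            Nat.lt_succ_of_le (min_le_right _ _)⟩ : ℕ) :=
          a.toOrderHom.monotone (by simp only [Fin.mk_le_mk]; omega)
        split_ifs <;> omega⟩,
    ?_, ?_, ?_⟩
  · -- IsInert u'
    intro i
    have hi := i.isLt
    simp only [Hom.toOrderHom_mk, OrderHom.coe_mk, Fin.val_succ, Fin.coe_castSucc]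
    (try dsimp only)
    omega
  · -- IsActive a'
    constructor
    · apply Fin.ext
      simp only [Hom.toOrderHom_mk, OrderHom.coe_mk, Fin.val_zero]
      (try dsimp only)
      simp
    · apply Fin.ext
      simp only [Hom.toOrderHom_mk, OrderHom.coe_mk, Fin.val_last, len_mk]
      (try dsimp only)
      split_ifs with h1 h2
      · -- k.len ≤ b : then m.len = 0 and n.len = 0
        have hM0 : m.len = 0 := by omega
        have hlast0 : Fin.last m.len = 0 := Fin.ext (by simp [hM0])
        rw [hlast0, haval0] at haval1
        omega
      · have he : (⟨min (k.len - b) m.len, Nat.lt_succ_of_le (min_le_right _ _)⟩ :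
            Fin (m.len + 1)) = Fin.last m.len :=
          Fin.ext (by simp only [Fin.val_last]; (try dsimp only); omega)
        rw [he]
        omega
      · omega
  · -- IsPushout
    refine ⟨⟨?_⟩, ⟨CategoryTheory.Limits.PushoutCocone.IsColimit.mk _
      (fun s => SimplexCategory.Hom.mk
        ⟨fun x =>
          if x.val ≤ b then s.inr.toOrderHom ⟨min x.val k.len,
            Nat.lt_succ_of_le (min_le_right _ _)⟩
          else if x.val ≤ b + n.len then s.inl.toOrderHom ⟨min (x.val - b) n.len,
            Nat.lt_succ_of_le (min_le_right _ _)⟩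
          else s.inr.toOrderHom ⟨min (x.val - n.len + m.len) k.len,
            Nat.lt_succ_of_le (min_le_right _ _)⟩,
        by
          have hcond : ∀ z : Fin (m.len + 1),
              s.inl.toOrderHom (a.toOrderHom z) = s.inr.toOrderHom (u.toOrderHom z) := by
            intro z
            have h2 := congrArg (fun (f : m ⟶ s.pt) => f.toOrderHom z) s.condition
            simpa using h2
          intro x y hxy
          have hxy' : x.val ≤ y.val := hxy
          (try dsimp only)
          split_ifs with h1 h2 h3 h4 h5
          · exact s.inr.toOrderHom.monotone (by simp only [Fin.mk_le_mk]; omega)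
          · -- x low, y mid
            calc s.inr.toOrderHom ⟨min x.val k.len, Nat.lt_succ_of_le (min_le_right _ _)⟩
                ≤ s.inr.toOrderHom (u.toOrderHom 0) :=
                  s.inr.toOrderHom.monotone
                    (by simp only [Fin.le_def]; (try dsimp only); omega)
              _ = s.inl.toOrderHom (a.toOrderHom 0) := (hcond 0).symm
              _ = s.inl.toOrderHom 0 := by rw [ha0]
              _ ≤ _ := s.inl.toOrderHom.monotone (Fin.zero_le _)
          · -- x low, y high
            exact s.inr.toOrderHom.monotone (by simp only [Fin.mk_le_mk]; omega)
          · omega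
          · -- x mid, y mid
            exact s.inl.toOrderHom.monotone (by simp only [Fin.mk_le_mk]; omega)
          · -- x mid, y high
            calc s.inl.toOrderHom ⟨min (x.val - b) n.len, Nat.lt_succ_of_le (min_le_right _ _)⟩
                ≤ s.inl.toOrderHom (Fin.last n.len) :=
                  s.inl.toOrderHom.monotone
                    (by simp only [Fin.le_def, Fin.val_last]; (try dsimp only); omega)
              _ = s.inl.toOrderHom (a.toOrderHom (Fin.last m.len)) := by rw [ha1]
              _ = s.inr.toOrderHom (u.toOrderHom (Fin.last m.len)) := hcond _
              _ ≤ _ := s.inr.toOrderHom.monotone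
                  (by simp only [Fin.le_def]; (try dsimp only); omega)
          · omega
          · omega
          · exact s.inr.toOrderHom.monotone (by simp only [Fin.mk_le_mk]; omega)⟩)
      ?_ ?_ ?_⟩⟩
    · -- commutativity
      ext j : 3
      apply Fin.ext
      have hj := j.isLt
      have huj := hub j
      have hav := Fin.is_le (a.toOrderHom j)
      simp only [comp_toOrderHom, OrderHom.comp_coe, Function.comp_apply,
        Hom.toOrderHom_mk, OrderHom.coe_mk]
      (try dsimp only)
      split_ifs with h1 h2
      · -- (u j).val ≤ b, so j = 0
        have hj0 : j = 0 := Fin.ext (by simp only [Fin.val_zero]; omega)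
        rw [hj0, haval0]
        omega
      · have he : (⟨min ((u.toOrderHom j : ℕ) - b) m.len,
            Nat.lt_succ_of_le (min_le_right _ _)⟩ : Fin (m.len + 1)) = j :=
          Fin.ext (by (try dsimp only); omega)
        rw [he]
      · omega
    · -- fac_left
      intro s
      have hcond : ∀ z : Fin (m.len + 1),
          s.inl.toOrderHom (a.toOrderHom z) = s.inr.toOrderHom (u.toOrderHom z) := by
        intro z
        have h2 := congrArg (fun (f : m ⟶ s.pt) => f.toOrderHom z) s.condition
        simpa using h2
      ext j : 3
      have hj := j.isLt
      simp only [comp_toOrderHom, OrderHom.comp_coe, Function.comp_apply,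
        Hom.toOrderHom_mk, OrderHom.coe_mk]
      (try dsimp only)
      split_ifs with h1 h2
      · -- min (b+j) P ≤ b, so j = 0
        have hj0 : j = 0 := Fin.ext (by simp only [Fin.val_zero]; omega)
        subst hj0
        have h0 := hcond 0
        rw [ha0] at h0
        refine Eq.trans ?_ h0.symm
        apply congrArg
        apply Fin.ext
        simp only [Fin.val_zero]
        (try dsimp only)
        omega
      · apply congrArg
        apply Fin.ext
        (try dsimp only)
        omega
      · omega
    · -- fac_right
      intro s
      have hcond : ∀ z : Fin (m.len + 1),
          s.inl.toOrderHom (a.toOrderHom z) = s.inr.toOrderHom (u.toOrderHom z) := by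
        intro z
        have h2 := congrArg (fun (f : m ⟶ s.pt) => f.toOrderHom z) s.condition
        simpa using h2
      ext i : 3
      have hi := i.isLt
      have hav := Fin.is_le (a.toOrderHom ⟨min (i.val - b) m.len,
        Nat.lt_succ_of_le (min_le_right _ _)⟩)
      have hci := hcond ⟨min (i.val - b) m.len, Nat.lt_succ_of_le (min_le_right _ _)⟩
      have hui := hub ⟨min (i.val - b) m.len, Nat.lt_succ_of_le (min_le_right _ _)⟩
      simp only [] at hui
      simp only [comp_toOrderHom, OrderHom.comp_coe, Function.comp_apply,
        Hom.toOrderHom_mk, OrderHom.coe_mk]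
      (try dsimp only)
      split_ifs with h1 h2 h3 h4 h5 h6 h7
      · -- i low, value low
        apply congrArg; apply Fin.ext; (try dsimp only); omega
      · omega
      · omega
      · -- i mid, value low: a value is 0
        have hav0 : (a.toOrderHom ⟨min (i.val - b) m.len,
            Nat.lt_succ_of_le (min_le_right _ _)⟩ : ℕ) = 0 := by omega
        have h00 := hcond 0
        rw [ha0] at h00
        calc s.inr.toOrderHom _ = s.inr.toOrderHom (u.toOrderHom 0) := by
              apply congrArg; apply Fin.ext; (try dsimp only); omega
          _ = s.inl.toOrderHom 0 := h00.symm
          _ = s.inl.toOrderHom (a.toOrderHom ⟨min (i.val - b) m.len,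
              Nat.lt_succ_of_le (min_le_right _ _)⟩) := by
              apply congrArg; apply Fin.ext; simp only [Fin.val_zero]; omega
          _ = s.inr.toOrderHom (u.toOrderHom ⟨min (i.val - b) m.len,
              Nat.lt_succ_of_le (min_le_right _ _)⟩) := hci
          _ = s.inr.toOrderHom i := by apply congrArg; apply Fin.ext; omega
      · -- i mid, value mid
        calc s.inl.toOrderHom _ = s.inl.toOrderHom (a.toOrderHom ⟨min (i.val - b) m.len,
              Nat.lt_succ_of_le (min_le_right _ _)⟩) := by
              apply congrArg; apply Fin.ext; (try dsimp only); omega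
          _ = s.inr.toOrderHom (u.toOrderHom ⟨min (i.val - b) m.len,
              Nat.lt_succ_of_le (min_le_right _ _)⟩) := hci
          _ = s.inr.toOrderHom i := by apply congrArg; apply Fin.ext; omega
      · omega
      · omega
      · omega
      · -- i high
        apply congrArg; apply Fin.ext; (try dsimp only); omega
    · -- uniqueness
      intro s mm hm1 hm2
      ext x : 3
      have hx : (x : ℕ) < P + 1 := x.isLt
      simp only [Hom.toOrderHom_mk, OrderHom.coe_mk]
      (try dsimp only)
      split_ifs with h1 h2
      · -- x low
        have h2x := congrArg (fun (f : k ⟶ s.pt) => f.toOrderHom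
          ⟨min x.val k.len, Nat.lt_succ_of_le (min_le_right _ _)⟩) hm2
        simp only [comp_toOrderHom, OrderHom.comp_coe, Function.comp_apply,
          Hom.toOrderHom_mk, OrderHom.coe_mk] at h2x
        rw [← h2x]
        apply congrArg
        apply Fin.ext
        (try dsimp only)
        split_ifs <;> omega
      · -- x mid
        have h1x := congrArg (fun (f : n ⟶ s.pt) => f.toOrderHom
          ⟨min (x.val - b) n.len, Nat.lt_succ_of_le (min_le_right _ _)⟩) hm1
        simp only [comp_toOrderHom, OrderHom.comp_coe, Function.comp_apply,
          Hom.toOrderHom_mk, OrderHom.coe_mk] at h1x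
        rw [← h1x]
        apply congrArg
        apply Fin.ext
        (try dsimp only)
        omega
      · -- x high
        have h2x := congrArg (fun (f : k ⟶ s.pt) => f.toOrderHom
          ⟨min (x.val - n.len + m.len) k.len, Nat.lt_succ_of_le (min_le_right _ _)⟩) hm2
        simp only [comp_toOrderHom, OrderHom.comp_coe, Function.comp_apply,
          Hom.toOrderHom_mk, OrderHom.coe_mk] at h2x
        rw [← h2x]
        apply congrArg
        apply Fin.ext
        (try dsimp only)
        split_ifs <;> omega
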